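/- arXiv:1710.06416 — 2 statements merged into one kernel-verified Lean document; each statement's English description precedes it below -/
import Mathlib

section
/- Let n : ℕ, let sd(n) be the poset of nonempty finite subsets of Fin (n+1) ordered by inclusion, regarded as a category, and let W be the class of inclusions S ⊆ T with T = S ∪ {max T}. Then for every category E, precomposition with the functor min : sd(n) ⥤ (Fin (n+1))ᵒᵖ induces an equivalence of categories from the functor category Fun((Fin (n+1))ᵒᵖ, E) onto the full subcategory of Fun(sd(n), E) spanned by those functors that send every morphism of W to an isomorphism. -/
open CategoryTheory

/-- The subdivision `sd([n])`: the poset of nonempty finite subsets of `Fin (n+1)`,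
ordered by inclusion, regarded as a category. -/
abbrev Sd (n : ℕ) := {S : Finset (Fin (n + 1)) // S.Nonempty}

/-- The functor `min : sd([n]) ⥤ [n]ᵒᵖ` sending a nonempty subset to its minimum. -/
def sdMin (n : ℕ) : Sd n ⥤ (Fin (n + 1))ᵒᵖ where
  obj S := Opposite.op (S.1.min' S.2)
  map {S T} f := (homOfLE (Finset.min'_le T.1 (S.1.min' S.2)
      (by exact leOfHom f (S.1.min'_mem S.2)))).op
  map_id _ := rfl
  map_comp _ _ := rfl

/-- The class of morphisms `S ⊆ T` of `sd([n])` with `T = S ∪ {max T}`. -/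
def sdW (n : ℕ) : MorphismProperty (Sd n) :=
  fun S T _ => T.1 = insert (T.1.max' T.2) S.1

instance opHomSub {α : Type*} [Preorder α] (x y : αᵒᵖ) : Subsingleton (x ⟶ y) :=
  ⟨fun f g => Quiver.Hom.unop_inj (Subsingleton.elim _ _)⟩

def sdI (n : ℕ) : (Fin (n + 1))ᵒᵖ ⥤ Sd n where
  obj k := ⟨Finset.Icc k.unop (Fin.last n), ⟨k.unop, by simp [Fin.le_last]⟩⟩
  map {k k'} f := homOfLE (by exact Finset.Icc_subset_Icc (leOfHom f.unop) le_rfl)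
  map_id _ := rfl
  map_comp _ _ := rfl

lemma minIcc (n : ℕ) (k : Fin (n + 1)) :
    (Finset.Icc k (Fin.last n)).min' ⟨k, by simp [Fin.le_last]⟩ = k :=
  le_antisymm (Finset.min'_le _ k (by simp [Fin.le_last]))
    (Finset.le_min' _ _ _ fun y hy => (Finset.mem_Icc.mp hy).1)

lemma sdW_min_eq {n : ℕ} {S T : Sd n} (f : S ⟶ T) (h : sdW n f) :
    S.1.min' S.2 = T.1.min' T.2 := by
  have hST : S.1 ⊆ T.1 := leOfHom f
  have h1 : T.1.min' T.2 ≤ S.1.min' S.2 :=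
    Finset.min'_le _ _ (hST (S.1.min'_mem S.2))
  refine le_antisymm ?_ h1
  have hmem : T.1.min' T.2 ∈ insert (T.1.max' T.2) S.1 := h ▸ T.1.min'_mem T.2
  rcases Finset.mem_insert.mp hmem with h2 | h2
  · have h3 : S.1.min' S.2 ≤ T.1.max' T.2 :=
      Finset.le_max' _ _ (hST (S.1.min'_mem S.2))
    exact h3.trans (le_of_eq h2.symm)
  · exact Finset.min'_le _ _ h2

lemma isIso_of_le_sd {n : ℕ} {X Y : Sd n} (f : X ⟶ Y) (h : Y ≤ X) : IsIso f :=
  ⟨homOfLE h, Subsingleton.elim _ _, Subsingleton.elim _ _⟩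

lemma invert_from_singleton {n : ℕ} {E : Type*} [Category E] {F : Sd n ⥤ E}
    (hF : (sdW n).IsInvertedBy F) :
    ∀ (c : ℕ) (S T : Sd n) (f : S ⟶ T), T.1.card ≤ c →
      S.1 = {T.1.min' T.2} → IsIso (F.map f) := by
  intro c
  induction c with
  | zero => intro S T f hc _; exact absurd (Finset.card_pos.mpr T.2) (by omega)
  | succ c ih =>
    intro S T f hc hS
    by_cases h1 : T.1.card ≤ 1
    · -- T is a singleton, so S = T
      have hTS : T ≤ S := by
        show T.1 ⊆ S.1
        intro x hx
        have hx' : x = T.1.min' T.2 :=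
          Finset.card_le_one.mp h1 x hx _ (T.1.min'_mem T.2)
        rw [hS, hx']
        exact Finset.mem_singleton_self _
      have := isIso_of_le_sd f hTS
      infer_instance
    · push_neg at h1
      have hlt : T.1.min' T.2 < T.1.max' T.2 := Finset.min'_lt_max'_of_card _ h1
      set M := T.1.max' T.2 with hM
      have hT'ne : T.1.min' T.2 ∈ T.1.erase M :=
        Finset.mem_erase.mpr ⟨ne_of_lt hlt, T.1.min'_mem T.2⟩
      set T' : Sd n := ⟨T.1.erase M, ⟨_, hT'ne⟩⟩ with hT'
      have hmin : T'.1.min' T'.2 = T.1.min' T.2 :=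
        le_antisymm (Finset.min'_le _ _ hT'ne)
          (Finset.min'_le _ _ (Finset.erase_subset _ _ (T'.1.min'_mem T'.2)))
      have hsub1 : S ≤ T' := by
        show S.1 ⊆ T'.1
        rw [hS]
        exact Finset.singleton_subset_iff.mpr hT'ne
      let f1 : S ⟶ T' := homOfLE hsub1
      let f2 : T' ⟶ T := homOfLE (by exact Finset.erase_subset _ _)
      have hW : sdW n f2 := (Finset.insert_erase (T.1.max'_mem T.2)).symm
      have i2 : IsIso (F.map f2) := hF f2 hW
      have hcard : T'.1.card ≤ c := by
        have h5 : T'.1.card = T.1.card - 1 := Finset.card_erase_of_mem (T.1.max'_mem T.2)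
        omega
      have i1 : IsIso (F.map f1) := ih S T' f1 hcard (by rw [hS, hmin])
      have : f = f1 ≫ f2 := Subsingleton.elim _ _
      rw [this, F.map_comp]
      infer_instance

lemma invert_of_min_eq {n : ℕ} {E : Type*} [Category E] {F : Sd n ⥤ E}
    (hF : (sdW n).IsInvertedBy F) {S T : Sd n} (f : S ⟶ T)
    (h : S.1.min' S.2 = T.1.min' T.2) : IsIso (F.map f) := by
  set s : Sd n := ⟨{S.1.min' S.2}, Finset.singleton_nonempty _⟩ with hs
  have hg : s ≤ S := Finset.singleton_subset_iff.mpr (S.1.min'_mem S.2)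
  let g : s ⟶ S := homOfLE hg
  have i1 : IsIso (F.map g) :=
    invert_from_singleton hF S.1.card s S g le_rfl rfl
  have i2 : IsIso (F.map (g ≫ f)) :=
    invert_from_singleton hF T.1.card s T (g ≫ f) le_rfl (by rw [hs, h])
  have h3 : IsIso (F.map g ≫ F.map f) := by rw [← F.map_comp]; exact i2
  exact IsIso.of_isIso_comp_left (F.map g) (F.map f)

lemma isIso_op_of_eq {n : ℕ} {x y : (Fin (n + 1))ᵒᵖ} (f : x ⟶ y) (h : x = y) :
    IsIso f := by
  subst h
  have : f = 𝟙 x := Subsingleton.elim _ _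
  rw [this]; infer_instance

lemma min_inverts {n : ℕ} {E : Type*} [Category E] (G : (Fin (n + 1))ᵒᵖ ⥤ E) :
    (sdW n).IsInvertedBy (sdMin n ⋙ G) := by
  intro S T f hf
  have h := sdW_min_eq f hf
  have : IsIso ((sdMin n).map f) := isIso_op_of_eq _ (by simp [sdMin, h])
  show IsIso (G.map ((sdMin n).map f))
  infer_instance

lemma sdIM_obj_eq (n : ℕ) (k : (Fin (n + 1))ᵒᵖ) :
    (sdI n ⋙ sdMin n).obj k = k :=
  congrArg Opposite.op (minIcc n k.unop)

def sdEta {n : ℕ} (S : Sd n) : S ⟶ (sdMin n ⋙ sdI n).obj S :=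
  homOfLE (by
    intro x hx
    exact Finset.mem_Icc.mpr ⟨Finset.min'_le _ _ hx, Fin.le_last x⟩)

lemma sdEta_min_eq {n : ℕ} (S : Sd n) :
    S.1.min' S.2 = (((sdMin n ⋙ sdI n).obj S).1.min' ((sdMin n ⋙ sdI n).obj S).2) := by
  exact (minIcc n (S.1.min' S.2)).symm

/-- Precomposition with `min : sd([n]) ⥤ [n]ᵒᵖ` induces an equivalence of categories
from `Fun([n]ᵒᵖ, E)` onto the full subcategory of `Fun(sd([n]), E)` spanned by the
functors sending every morphism of `W` to an isomorphism. -/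
theorem precomposition_sdMin_equivalence (n : ℕ) (E : Type*) [Category E] :
    ∃ (e : ((Fin (n + 1))ᵒᵖ ⥤ E) ≌
        ObjectProperty.FullSubcategory (fun F : Sd n ⥤ E => (sdW n).IsInvertedBy F)),
      e.functor ⋙ ObjectProperty.ι _ =
        (Functor.whiskeringLeft (Sd n) ((Fin (n + 1))ᵒᵖ) E).obj (sdMin n) := by
  let P : ObjectProperty (Sd n ⥤ E) := fun F => (sdW n).IsInvertedBy F
  let Φ : ((Fin (n + 1))ᵒᵖ ⥤ E) ⥤ ObjectProperty.FullSubcategory P :=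
    ObjectProperty.lift P ((Functor.whiskeringLeft (Sd n) ((Fin (n + 1))ᵒᵖ) E).obj (sdMin n))
      (fun G => min_inverts G)
  let Ψ : ObjectProperty.FullSubcategory P ⥤ ((Fin (n + 1))ᵒᵖ ⥤ E) :=
    ObjectProperty.ι P ⋙
      (Functor.whiskeringLeft ((Fin (n + 1))ᵒᵖ) (Sd n) E).obj (sdI n)
  -- unit
  let unitIso : 𝟭 ((Fin (n + 1))ᵒᵖ ⥤ E) ≅ Φ ⋙ Ψ :=
    NatIso.ofComponents
      (fun G => NatIso.ofComponents
        (fun k => G.mapIso (eqToIso (sdIM_obj_eq n k).symm))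
        (by
          intro k k' f
          show G.map f ≫ G.map _ = G.map _ ≫ G.map _
          rw [← G.map_comp, ← G.map_comp]
          congr 1))
      (by
        intro G G' α
        ext k
        exact (α.naturality _).symm)
  -- counit pieces
  have etaIso : ∀ (X : ObjectProperty.FullSubcategory P) (S : Sd n), IsIso (X.obj.map (sdEta S)) :=
    fun X S => invert_of_min_eq X.property (sdEta S) (sdEta_min_eq S)
  let dIso : ∀ X : ObjectProperty.FullSubcategory P, X.obj ≅ (sdMin n ⋙ sdI n ⋙ X.obj) :=
    fun X => NatIso.ofComponents
      (fun S => @asIso _ _ _ _ (X.obj.map (sdEta S)) (etaIso X S))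
      (by
        intro S S' f
        simp only [asIso_hom, Functor.comp_map]
        rw [← X.obj.map_comp, ← X.obj.map_comp]
        congr 1)
  let counitIso : Ψ ⋙ Φ ≅ 𝟭 (ObjectProperty.FullSubcategory P) :=
    NatIso.ofComponents
      (fun X => P.isoMk (dIso X).symm)
      (by
        intro X Y φ
        apply ObjectProperty.hom_ext
        apply NatTrans.ext
        funext S
        show φ.hom.app _ ≫ inv (Y.obj.map (sdEta S)) = inv (X.obj.map (sdEta S)) ≫ φ.hom.app S
        rw [IsIso.comp_inv_eq, Category.assoc, IsIso.eq_inv_comp]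
        exact φ.hom.naturality (sdEta S))
  exact ⟨CategoryTheory.Equivalence.mk Φ Ψ unitIso counitIso, rfl⟩
end

section
/- The assignment sending n : ℕ+ to the subgroup μ_n := {z ∈ Circle | z ^ (n : ℕ) = 1} of n-th roots of unity, and sending ⊤ to the full group, defines an order isomorphism from WithTop ℕ+ — where ℕ+ is partially ordered by divisibility and ⊤ is a top element — onto the poset of closed subgroups of the circle group Circle, ordered by inclusion. In particular: every proper closed subgroup of Circle equals μ_n for a unique n ≥ 1, and μ_m ≤ μ_n if and only if m divides n. -/
/-- The positive natural numbers, partially ordered by divisibility. -/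
def PNatDiv : Type := ℕ+

instance : PartialOrder PNatDiv where
  le a b := (show ℕ+ from a) ∣ (show ℕ+ from b)
  le_refl a := dvd_refl _
  le_trans a b c hab hbc := dvd_trans hab hbc
  le_antisymm a b hab hba := PNat.dvd_antisymm hab hba

/-- The subgroup `μ_n` of `n`-th roots of unity in the circle group. -/
noncomputable def rootsOfUnitySubgroup (n : ℕ+) : Subgroup Circle where
  carrier := {z | z ^ (n : ℕ) = 1}
  one_mem' := one_pow _
  mul_mem' := by
    intro a b ha hb
    simp only [Set.mem_setOf_eq] at *
    rw [mul_pow, ha, hb, one_mul]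
  inv_mem' := by
    intro a ha
    simp only [Set.mem_setOf_eq] at *
    rw [inv_pow, ha, inv_one]

/-- The poset of closed subgroups of the circle group, ordered by inclusion. -/
abbrev ClosedSubgroupCircle := {H : Subgroup Circle // IsClosed (H : Set Circle)}


open Real

lemma mem_rootsOfUnitySubgroup {n : ℕ+} {z : Circle} :
    z ∈ rootsOfUnitySubgroup n ↔ z ^ (n : ℕ) = 1 := Iff.rfl

lemma Circle.exp_pow (r : ℝ) (m : ℕ) : Circle.exp r ^ m = Circle.exp (m * r) := by
  induction m with
  | zero => simp
  | succ m ih =>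
    rw [pow_succ, ih, ← Circle.exp_add]
    congr 1
    push_cast
    ring

lemma rootsOfUnitySubgroup_isClosed (n : ℕ+) :
    IsClosed ((rootsOfUnitySubgroup n : Subgroup Circle) : Set Circle) := by
  have h : ((rootsOfUnitySubgroup n : Subgroup Circle) : Set Circle)
      = (fun z : Circle => z ^ (n : ℕ)) ⁻¹' {1} := by
    ext z; simp [mem_rootsOfUnitySubgroup]
  rw [h]
  exact isClosed_singleton.preimage (continuous_pow _)

lemma rootsOfUnitySubgroup_ne_top (n : ℕ+) : rootsOfUnitySubgroup n ≠ ⊤ := by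
  intro h
  have hz : Circle.exp (π / n) ∈ rootsOfUnitySubgroup n := h ▸ Subgroup.mem_top _
  rw [mem_rootsOfUnitySubgroup, Circle.exp_pow, mul_div_cancel₀] at hz
  · rcases Circle.exp_eq_one.1 hz with ⟨j, hj⟩
    have hπ : (0:ℝ) < π := pi_pos
    have h1 : (1:ℝ) = 2 * j :=
      mul_left_cancel₀ pi_ne_zero (by rw [mul_one]; linear_combination hj)
    have : (1:ℤ) = 2 * j := by exact_mod_cast h1
    omega
  · exact_mod_cast n.ne_zero

lemma rootsOfUnitySubgroup_le_iff {m n : ℕ+} :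
    rootsOfUnitySubgroup m ≤ rootsOfUnitySubgroup n ↔ m ∣ n := by
  constructor
  · intro h
    have hm0 : ((m : ℕ) : ℝ) ≠ 0 := by exact_mod_cast m.ne_zero
    have hζm : Circle.exp (2 * π / m) ∈ rootsOfUnitySubgroup m := by
      rw [mem_rootsOfUnitySubgroup, Circle.exp_pow, mul_div_cancel₀ _ hm0]
      exact Circle.exp_two_pi
    have hζn := mem_rootsOfUnitySubgroup.1 (h hζm)
    rw [Circle.exp_pow, Circle.exp_eq_one] at hζn
    obtain ⟨j, hj⟩ := hζn
    have hreal : ((n : ℕ) : ℝ) = j * m := by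
      have h2 : ((n : ℕ) : ℝ) * (2 * π) = (j * (m : ℕ)) * (2 * π) := by
        field_simp at hj
        linear_combination (2 * π) * hj
      exact mul_right_cancel₀ two_pi_pos.ne' h2
    have hint : ((n : ℕ) : ℤ) = j * m := by exact_mod_cast hreal
    rw [PNat.dvd_iff]
    exact Int.natCast_dvd_natCast.1 ⟨j, by rw [hint, mul_comm]⟩
  · rintro ⟨c, rfl⟩
    intro z hz
    rw [mem_rootsOfUnitySubgroup] at *
    rw [PNat.mul_coe, pow_mul, hz, one_pow]

lemma closed_subgroup_classification (H : Subgroup Circle)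
    (hc : IsClosed (H : Set Circle)) (hne : H ≠ ⊤) :
    ∃ n : ℕ+, H = rootsOfUnitySubgroup n := by
  -- preimage of H in ℝ
  set G : AddSubgroup ℝ :=
    { carrier := {x | Circle.exp x ∈ H}
      zero_mem' := by simp [Circle.exp_zero, one_mem]
      add_mem' := by
        intro a b ha hb
        simp only [Set.mem_setOf_eq, Circle.exp_add] at *
        exact mul_mem ha hb
      neg_mem' := by
        intro a ha
        simp only [Set.mem_setOf_eq, Circle.exp_neg] at *
        exact inv_mem ha } with hGdef
  have hmemG : ∀ x : ℝ, x ∈ G ↔ Circle.exp x ∈ H := fun x => Iff.rfl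
  have hexp_cont : Continuous Circle.exp := Circle.exp.continuous
  have hexp_surj : Function.Surjective Circle.exp := fun z => ⟨Complex.arg z, Circle.exp_arg z⟩
  rcases AddSubgroup.dense_or_cyclic G with hd | ⟨a, ha⟩
  · exfalso
    apply hne
    rw [Subgroup.eq_top_iff']
    intro z
    have hdense : Dense (Circle.exp '' (G : Set ℝ)) :=
      hexp_surj.denseRange.dense_image hexp_cont hd
    have hsub : Circle.exp '' (G : Set ℝ) ⊆ (H : Set Circle) := by
      rintro _ ⟨x, hx, rfl⟩; exact hx
    have : closure (Circle.exp '' (G : Set ℝ)) ⊆ (H : Set Circle) :=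
      hc.closure_subset_iff.2 hsub
    exact this (hdense z)
  · -- G = zmultiples a
    have h2π : (2 * π : ℝ) ∈ G := by
      rw [hmemG, Circle.exp_two_pi]; exact one_mem H
    rw [ha, AddSubgroup.mem_closure_singleton] at h2π
    obtain ⟨k, hka⟩ := h2π
    rw [zsmul_eq_mul] at hka
    have hk0 : k ≠ 0 := by
      rintro rfl
      simp only [Int.cast_zero, zero_mul] at hka
      exact two_pi_pos.ne (by linarith)
    refine ⟨⟨k.natAbs, Int.natAbs_pos.2 hk0⟩, ?_⟩
    have hmem' : ∀ x : ℝ, x ∈ G ↔ ∃ c : ℤ, (c : ℝ) * a = x := by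
      intro x
      rw [ha, AddSubgroup.mem_closure_singleton]
      simp [zsmul_eq_mul]
    ext z
    obtain ⟨r, hr⟩ := hexp_surj z
    subst hr
    change Circle.exp r ∈ H ↔ Circle.exp r ^ k.natAbs = 1
    show Circle.exp r ∈ H ↔ Circle.exp r ^ k.natAbs = 1
    rw [Circle.exp_pow, Circle.exp_eq_one]
    rcases hk0.lt_or_gt with hkneg | hkpos
    · -- k < 0, natAbs k = -k
      have hnat : ((k.natAbs : ℝ)) = -(k : ℝ) := by
        rw [Nat.cast_natAbs]
        exact_mod_cast abs_of_neg hkneg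
      constructor
      · intro hzH
        obtain ⟨c, hc⟩ := (hmem' r).1 ((hmemG r).2 hzH)
        exact ⟨-c, by rw [← hc, hnat, ← hka]; push_cast; ring⟩
      · rintro ⟨j, hj⟩
        apply (hmemG r).1
        apply (hmem' r).2
        refine ⟨-j, ?_⟩
        have hk' : (k : ℝ) ≠ 0 := by exact_mod_cast hk0
        rw [hnat, ← hka] at hj
        have hz : (k : ℝ) * (((-j : ℤ) : ℝ) * a - r) = 0 := by push_cast; linear_combination hj
        have h0 := (mul_eq_zero.1 hz).resolve_left hk'
        linarith [h0]
    · -- k > 0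
      have hnat : ((k.natAbs : ℝ)) = (k : ℝ) := by
        rw [Nat.cast_natAbs]
        exact_mod_cast abs_of_pos hkpos
      constructor
      · intro hzH
        obtain ⟨c, hc⟩ := (hmem' r).1 ((hmemG r).2 hzH)
        exact ⟨c, by rw [← hc, hnat, ← hka]; push_cast; ring⟩
      · rintro ⟨j, hj⟩
        apply (hmemG r).1
        apply (hmem' r).2
        refine ⟨j, ?_⟩
        have hk' : (k : ℝ) ≠ 0 := by exact_mod_cast hk0
        rw [hnat, ← hka] at hj
        have hz : (k : ℝ) * (((j : ℤ) : ℝ) * a - r) = 0 := by push_cast; linear_combination -hj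
        have h0 := (mul_eq_zero.1 hz).resolve_left hk'
        linarith [h0]

noncomputable def circleF : WithTop PNatDiv → ClosedSubgroupCircle
  | ⊤ => ⟨⊤, by rw [Subgroup.coe_top]; exact isClosed_univ⟩
  | (n : PNatDiv) => ⟨rootsOfUnitySubgroup (show ℕ+ from n), rootsOfUnitySubgroup_isClosed _⟩

lemma circleF_le_iff (x y : WithTop PNatDiv) : circleF x ≤ circleF y ↔ x ≤ y := by
  match x, y with
  | ⊤, ⊤ => simp [circleF]
  | (m : PNatDiv), ⊤ =>
    simp only [circleF, Subtype.mk_le_mk]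
    exact ⟨fun _ => le_top, fun _ => le_top⟩
  | ⊤, (n : PNatDiv) =>
    simp only [circleF, Subtype.mk_le_mk, top_le_iff]
    constructor
    · intro h; exact absurd h.symm (Ne.symm (rootsOfUnitySubgroup_ne_top _))
    · intro h; exact absurd h (by simp)
  | (m : PNatDiv), (n : PNatDiv) =>
    simp only [circleF, Subtype.mk_le_mk, WithTop.coe_le_coe]
    exact rootsOfUnitySubgroup_le_iff

lemma circleF_surjective : Function.Surjective circleF := by
  rintro ⟨H, hc⟩
  by_cases h : H = ⊤
  · exact ⟨⊤, Subtype.ext h.symm⟩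
  · obtain ⟨n, hn⟩ := closed_subgroup_classification H hc h
    exact ⟨WithTop.some (n : PNatDiv), Subtype.ext hn.symm⟩

lemma circleF_injective : Function.Injective circleF := fun a b h =>
  le_antisymm ((circleF_le_iff a b).1 h.le) ((circleF_le_iff b a).1 h.ge)


/-- The assignment `n ↦ μ_n`, `⊤ ↦ Circle`, defines an order isomorphism from
`WithTop ℕ+` (with `ℕ+` ordered by divisibility and `⊤` a top element) onto the poset
of closed subgroups of the circle group ordered by inclusion.  In particular every
proper closed subgroup of `Circle` is `μ_n` for a unique `n ≥ 1`, and `μ_m ≤ μ_n` iff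
`m ∣ n`. -/
theorem closedSubgroups_circle_orderIso :
    ∃ e : WithTop PNatDiv ≃o ClosedSubgroupCircle,
      (∀ n : ℕ+, (e (WithTop.some (n : PNatDiv))).1 = rootsOfUnitySubgroup n) ∧
      (e ⊤).1 = ⊤ := by
  refine ⟨{ toEquiv := Equiv.ofBijective circleF ⟨circleF_injective, circleF_surjective⟩,
            map_rel_iff' := fun {a b} => circleF_le_iff a b }, fun n => rfl, rfl⟩
end
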